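/- Let X_R and X_C be real n×n matrices with X_R symmetric and X_C antisymmetric. Then the Hermitian matrix X := X_R + i·X_C ∈ M_n(ℂ) is positive semidefinite if and only if the real symmetric 2n×2n block matrix [[X_R, −X_C], [X_C, X_R]] is positive semidefinite. -/

import Mathlib

open scoped ComplexOrder
open scoped Matrix

section aux

variable {n : ℕ}

private lemma sym_dot {R : Type*} [CommRing R] (A : Matrix (Fin n) (Fin n) R)
    (hA : Aᵀ = A) (u v : Fin n → R) : u ⬝ᵥ A *ᵥ v = v ⬝ᵥ A *ᵥ u := by
  rw [Matrix.dotProduct_mulVec, ← Matrix.mulVec_transpose, hA, dotProduct_comm]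

private lemma antisym_dot (B : Matrix (Fin n) (Fin n) ℂ)
    (hB : Bᵀ = -B) (u : Fin n → ℂ) : u ⬝ᵥ B *ᵥ u = 0 := by
  have h : u ⬝ᵥ B *ᵥ u = -(u ⬝ᵥ B *ᵥ u) := by
    conv_lhs => rw [Matrix.dotProduct_mulVec, ← Matrix.mulVec_transpose, hB,
      Matrix.neg_mulVec, neg_dotProduct, dotProduct_comm]
  have h2 : (2 : ℂ) * (u ⬝ᵥ B *ᵥ u) = 0 := by linear_combination h
  exact (mul_eq_zero.mp h2).resolve_left two_ne_zero

private lemma ofReal_dot (M : Matrix (Fin n) (Fin n) ℝ) (a c : Fin n → ℝ) :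
    ((a ⬝ᵥ M *ᵥ c : ℝ) : ℂ) =
      ((fun i => (a i : ℂ)) ⬝ᵥ (M.map Complex.ofReal) *ᵥ (fun i => (c i : ℂ))) := by
  simp only [← Complex.ofRealHom_eq_coe]
  rw [RingHom.map_dotProduct]
  congr 1
  funext i
  exact RingHom.map_mulVec Complex.ofRealHom M c i

private lemma quad_eq (XR XC : Matrix (Fin n) (Fin n) ℝ)
    (hR : XR.IsSymm) (hC : XC.transpose = -XC) (a b : Fin n → ℝ) :
    star ((fun i => (a i : ℂ)) + Complex.I • fun i => (b i : ℂ)) ⬝ᵥ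
        (XR.map Complex.ofReal + Complex.I • XC.map Complex.ofReal) *ᵥ
        ((fun i => (a i : ℂ)) + Complex.I • fun i => (b i : ℂ)) =
      ((Sum.elim a b ⬝ᵥ (Matrix.fromBlocks XR (-XC) XC XR) *ᵥ Sum.elim a b : ℝ) : ℂ) := by
  set u : Fin n → ℂ := fun i => (a i : ℂ)
  set v : Fin n → ℂ := fun i => (b i : ℂ)
  set A := XR.map Complex.ofReal
  set B := XC.map Complex.ofReal
  have hA : Aᵀ = A := by
    have := hR
    simp only [Matrix.IsSymm] at this
    simp [A, ← Matrix.transpose_map, this]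
  have hB : Bᵀ = -B := by
    rw [show B = XC.map Complex.ofReal from rfl, ← Matrix.transpose_map, hC]
    ext i j; simp
  have hstar : star ((fun i => (a i : ℂ)) + Complex.I • fun i => (b i : ℂ))
      = u - Complex.I • v := by
    funext i
    simp [u, v, Complex.ext_iff]
  rw [hstar]
  rw [Matrix.fromBlocks_mulVec, sumElim_dotProduct_sumElim]
  simp only [Sum.elim_comp_inl, Sum.elim_comp_inr]
  have h1 := sym_dot A hA u v
  have h2 := antisym_dot B hB u
  have h3 := antisym_dot B hB v
  have e1 := ofReal_dot XR a a
  have e2 := ofReal_dot XR b b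
  have e3 := ofReal_dot XC a b
  have e4 := ofReal_dot XC b a
  push_cast
  rw [dotProduct_add, dotProduct_add]
  simp only [Matrix.neg_mulVec, dotProduct_neg]
  push_cast [e1, e2, e3, e4]
  simp only [Matrix.add_mulVec, Matrix.mulVec_add, Matrix.mulVec_smul,
    Matrix.smul_mulVec, dotProduct_add, sub_dotProduct,
    smul_dotProduct, dotProduct_smul, smul_eq_mul]
  linear_combination (Complex.I : ℂ) * h1 + Complex.I * h2 + Complex.I * h3 +
    (u ⬝ᵥ B *ᵥ v - v ⬝ᵥ B *ᵥ u - v ⬝ᵥ A *ᵥ v - Complex.I * (v ⬝ᵥ B *ᵥ v)) * Complex.I_sq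

end aux

theorem complex_posSemidef_iff_realification (n : ℕ)
    (XR XC : Matrix (Fin n) (Fin n) ℝ)
    (hR : XR.IsSymm) (hC : XC.transpose = -XC) :
    (XR.map Complex.ofReal + Complex.I • XC.map Complex.ofReal).PosSemidef ↔
      (Matrix.fromBlocks XR (-XC) XC XR).PosSemidef := by
  rw [Matrix.posSemidef_iff_dotProduct_mulVec, Matrix.posSemidef_iff_dotProduct_mulVec]
  constructor
  · rintro ⟨hherm, hpos⟩
    constructor
    · show _ = _
      rw [Matrix.conjTranspose_eq_transpose_of_trivial, Matrix.fromBlocks_transpose,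
        hR, hC, Matrix.transpose_neg, hC, neg_neg]
    · intro x
      have hx : x = Sum.elim (x ∘ Sum.inl) (x ∘ Sum.inr) := by
        funext i; cases i <;> rfl
      have key := quad_eq XR XC hR hC (x ∘ Sum.inl) (x ∘ Sum.inr)
      have hp := hpos ((fun i => (((x ∘ Sum.inl) i) : ℂ)) + Complex.I • fun i => (((x ∘ Sum.inr) i) : ℂ))
      rw [key, Complex.zero_le_real] at hp
      have hsx : star x = x := by funext i; simp
      rw [hsx, hx]
      exact hp
  · rintro ⟨hherm, hpos⟩
    constructor
    · show _ = _
      ext i j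
      have hR' : XR j i = XR i j := congr_fun (congr_fun hR i) j
      have hC' : XC j i = -XC i j := by
        have := congr_fun (congr_fun hC i) j
        simpa using this
      simp [Matrix.conjTranspose_apply, Complex.ext_iff, hR', hC']
    · intro z
      have hz : z = (fun i => ((z i).re : ℂ)) + Complex.I • fun i => ((z i).im : ℂ) := by
        funext i
        simp [Complex.ext_iff]
      have key := quad_eq XR XC hR hC (fun i => (z i).re) (fun i => (z i).im)
      rw [← hz] at key
      rw [key, Complex.zero_le_real]
      have := hpos (Sum.elim (fun i => (z i).re) (fun i => (z i).im))
      rwa [show star (Sum.elim (fun i => (z i).re) (fun i => (z i).im))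
        = Sum.elim (fun i => (z i).re) (fun i => (z i).im) by funext i; simp] at this
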